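/- Let ξ ∈ {±1}^{∂Λ} be an Ising boundary condition on a finite box Λ ⊂ ℤ², inducing the FK wiring that wires the plus boundary sites 𝓟(ξ) pairwise and the minus boundary sites 𝓜(ξ) pairwise, and let A^ξ be the event that there is no open path connecting 𝓟(ξ) to 𝓜(ξ). Let ν^ξ denote the critical FK-Ising measure on Λ̄ = Λ ∪ ∂Λ with this wiring and ν¹ the one with the fully wired boundary. Then for any set of edges Δ, any edge e ∉ Δ, and any configurations η, η' ∈ {0,1}^Δ with η' ≤ η pointwise such that the conditioning events have positive probability, ν¹(ω(e) = 1 | ω(Δ) = η) ≥ ν^ξ(ω(e) = 1 | A^ξ, ω(Δ) = η'). -/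

import Mathlib

open scoped Classical

/-- Sites of the square lattice `ℤ²`. -/
abbrev Site : Type := ℤ × ℤ

/-- Nearest-neighbor adjacency in `ℤ²`. -/
def Adj (u v : Site) : Prop :=
  (u.1 - v.1).natAbs + (u.2 - v.2).natAbs = 1

instance : ∀ u v : Site, Decidable (Adj u v) := fun u v => by
  unfold Adj; infer_instance

/-- The four nearest neighbors of a site. -/
def nbrs (u : Site) : Finset Site :=
  {(u.1 + 1, u.2), (u.1 - 1, u.2), (u.1, u.2 + 1), (u.1, u.2 - 1)}

/-- The (outer) boundary `∂Λ`: sites of `ℤ² ∖ Λ` adjacent to `Λ`. -/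
def bdry (Λ : Finset Site) : Finset Site :=
  (Λ.biUnion nbrs) \ Λ

/-- The nearest-neighbor edges of a vertex set `V ⊆ ℤ²`, each edge recorded once,
oriented rightwards or upwards. -/
def edges (V : Finset Site) : Finset (Site × Site) :=
  (V ×ˢ V).filter fun e => e.2 = (e.1.1 + 1, e.1.2) ∨ e.2 = (e.1.1, e.1.2 + 1)

/-- `u` and `v` are joined by an open edge of the configuration `ω`. -/
def openAdj (V : Finset Site) (ω : edges V → Bool) (u v : Site) : Prop :=
  (∃ h : (u, v) ∈ edges V, ω ⟨(u, v), h⟩) ∨ (∃ h : (v, u) ∈ edges V, ω ⟨(v, u), h⟩)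

/-- Connectivity by open paths, allowing in addition the use of the boundary
wiring `W`. -/
def fkConn (V : Finset Site) (ω : edges V → Bool) (W : Site → Site → Prop)
    (u v : Site) : Prop :=
  Relation.EqvGen (fun a b => openAdj V ω a b ∨ W a b) u v

/-- Connectivity by open paths only (not using any boundary wiring). -/
def openConn (V : Finset Site) (ω : edges V → Bool) (u v : Site) : Prop :=
  Relation.EqvGen (openAdj V ω) u v

/-- The partition of `V` into FK clusters (wired sites being identified). -/
def clusterSetoid (V : Finset Site) (ω : edges V → Bool) (W : Site → Site → Prop) :
    Setoid V :=
  Setoid.comap Subtype.val (Relation.EqvGen.setoid fun a b => openAdj V ω a b ∨ W a b)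

/-- The number of clusters `k(ω)`. -/
noncomputable def numClusters (V : Finset Site) (ω : edges V → Bool)
    (W : Site → Site → Prop) : ℕ :=
  Nat.card (Quotient (clusterSetoid V ω W))

/-- The number of open edges `o(ω)`. -/
def numOpen (V : Finset Site) (ω : edges V → Bool) : ℕ :=
  (Finset.univ.filter fun e : edges V => ω e = true).card

/-- The number of closed edges `c(ω)`. -/
def numClosed (V : Finset Site) (ω : edges V → Bool) : ℕ :=
  (Finset.univ.filter fun e : edges V => ω e = false).card

/-- The FK weight `p^{o(ω)} (1-p)^{c(ω)} 2^{k(ω)}` (`q = 2`). -/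
noncomputable def fkWeight (p : ℝ) (V : Finset Site) (W : Site → Site → Prop)
    (ω : edges V → Bool) : ℝ :=
  p ^ numOpen V ω * (1 - p) ^ numClosed V ω * 2 ^ numClusters V ω W

/-- FK-Ising (`q = 2`) probability of an event `A`, with edge parameter `p`
and boundary wiring `W`. -/
noncomputable def fkProb (p : ℝ) (V : Finset Site) (W : Site → Site → Prop)
    (A : (edges V → Bool) → Prop) : ℝ :=
  (∑ ω : edges V → Bool, if A ω then fkWeight p V W ω else 0) /
    ∑ ω : edges V → Bool, fkWeight p V W ω

/-- The critical (self-dual) edge parameter `p_sd = √2/(1+√2)`. -/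
noncomputable def pSD : ℝ := Real.sqrt 2 / (1 + Real.sqrt 2)

/-- The inner boundary of `V`: sites of `V` adjacent to its complement. -/
def innerBdry (V : Finset Site) : Finset Site :=
  V.filter fun u => ∃ v ∈ nbrs u, v ∉ V
/-- The FK wiring induced by an Ising boundary condition `ξ`: the plus boundary sites
are wired pairwise, and the minus boundary sites are wired pairwise. -/
def wiringOf (Λ : Finset Site) (ξ : bdry Λ → Bool) : Site → Site → Prop :=
  fun u v => ∃ hu : u ∈ bdry Λ, ∃ hv : v ∈ bdry Λ, ξ ⟨u, hu⟩ = ξ ⟨v, hv⟩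

/-- The fully wired boundary condition: all boundary sites are wired pairwise. -/
def fullWiring (Λ : Finset Site) : Site → Site → Prop :=
  fun u v => u ∈ bdry Λ ∧ v ∈ bdry Λ

/-- The event `A^ξ`: no open path connects the plus boundary cluster `𝓟(ξ)` to the
minus boundary cluster `𝓜(ξ)`. -/
def noPMPath (Λ : Finset Site) (ξ : bdry Λ → Bool)
    (ω : edges (Λ ∪ bdry Λ) → Bool) : Prop :=
  ¬ ∃ p q : Site, ∃ hp : p ∈ bdry Λ, ∃ hq : q ∈ bdry Λ,
      ξ ⟨p, hp⟩ = true ∧ ξ ⟨q, hq⟩ = false ∧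
      fkConn (Λ ∪ bdry Λ) ω (wiringOf Λ ξ) p q

section ClusterCount

/-- Number of clusters determined by an arbitrary relation on sites. -/
noncomputable def kV (V : Finset Site) (R : Site → Site → Prop) : ℕ :=
  Nat.card (Quotient (Setoid.comap (Subtype.val : {x // x ∈ V} → Site)
    (Relation.EqvGen.setoid R)))

lemma eqvGen_le_eqvGen {α : Type*} {R R' : α → α → Prop}
    (h : ∀ a b, R a b → Relation.EqvGen R' a b) :
    ∀ {a b}, Relation.EqvGen R a b → Relation.EqvGen R' a b := by
  intro a b hab
  induction hab with
  | rel x y hxy => exact h x y hxy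
  | refl x => exact Relation.EqvGen.refl x
  | symm x y _ ih => exact Relation.EqvGen.symm _ _ ih
  | trans x y z _ _ ih1 ih2 => exact Relation.EqvGen.trans _ _ _ ih1 ih2

lemma kV_le {V : Finset Site} {R R' : Site → Site → Prop}
    (h : ∀ a b, R a b → Relation.EqvGen R' a b) : kV V R' ≤ kV V R := by
  refine Nat.card_le_card_of_surjective
    (Quotient.map' (fun x => x)
      (fun a b hab => eqvGen_le_eqvGen h hab)) ?_
  intro q
  induction q using Quotient.inductionOn' with
  | h x => exact ⟨Quotient.mk'' x, rfl⟩

lemma kV_congr {V : Finset Site} {R R' : Site → Site → Prop}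
    (h : ∀ a b, R a b ↔ R' a b) : kV V R = kV V R' :=
  le_antisymm (kV_le fun a b hr => Relation.EqvGen.rel _ _ ((h a b).2 hr))
    (kV_le fun a b hr => Relation.EqvGen.rel _ _ ((h a b).1 hr))

/-- Add a single (symmetrized) pair to a relation. -/
def addRel (R : Site → Site → Prop) (x y : Site) : Site → Site → Prop :=
  fun a b => R a b ∨ (a = x ∧ b = y) ∨ (a = y ∧ b = x)

lemma kV_add_of_conn {V : Finset Site} {R : Site → Site → Prop} {x y : Site}
    (hxy : Relation.EqvGen R x y) : kV V (addRel R x y) = kV V R := by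
  apply le_antisymm
  · exact kV_le (fun a b h => Relation.EqvGen.rel _ _ (Or.inl h))
  · apply kV_le
    rintro a b (h | ⟨rfl, rfl⟩ | ⟨rfl, rfl⟩)
    · exact Relation.EqvGen.rel _ _ h
    · exact hxy
    · exact Relation.EqvGen.symm _ _ hxy

lemma eqvGen_addRel_cases {R : Site → Site → Prop} {x y : Site}
    (hxy : ¬ Relation.EqvGen R x y) {a b : Site}
    (h : Relation.EqvGen (addRel R x y) a b) :
    Relation.EqvGen R a b ∨ (Relation.EqvGen R a x ∧ Relation.EqvGen R y b) ∨
      (Relation.EqvGen R a y ∧ Relation.EqvGen R x b) := by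
  induction h with
  | rel u v huv =>
    rcases huv with h | ⟨rfl, rfl⟩ | ⟨rfl, rfl⟩
    · exact Or.inl (Relation.EqvGen.rel _ _ h)
    · exact Or.inr (Or.inl ⟨Relation.EqvGen.refl _, Relation.EqvGen.refl _⟩)
    · exact Or.inr (Or.inr ⟨Relation.EqvGen.refl _, Relation.EqvGen.refl _⟩)
  | refl u => exact Or.inl (Relation.EqvGen.refl _)
  | symm u v _ ih =>
    rcases ih with h | ⟨h1, h2⟩ | ⟨h1, h2⟩
    · exact Or.inl (Relation.EqvGen.symm _ _ h)
    · exact Or.inr (Or.inr ⟨Relation.EqvGen.symm _ _ h2, Relation.EqvGen.symm _ _ h1⟩)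
    · exact Or.inr (Or.inl ⟨Relation.EqvGen.symm _ _ h2, Relation.EqvGen.symm _ _ h1⟩)
  | trans u v w _ _ ih1 ih2 =>
    rcases ih1 with h | ⟨h1, h2⟩ | ⟨h1, h2⟩ <;> rcases ih2 with g | ⟨g1, g2⟩ | ⟨g1, g2⟩
    · exact Or.inl (Relation.EqvGen.trans _ _ _ h g)
    · exact Or.inr (Or.inl ⟨Relation.EqvGen.trans _ _ _ h g1, g2⟩)
    · exact Or.inr (Or.inr ⟨Relation.EqvGen.trans _ _ _ h g1, g2⟩)
    · exact Or.inr (Or.inl ⟨h1, Relation.EqvGen.trans _ _ _ h2 g⟩)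
    · exact absurd (Relation.EqvGen.symm _ _ (Relation.EqvGen.trans _ _ _ h2 g1)) hxy
    · exact Or.inl (Relation.EqvGen.trans _ _ _ h1 g2)
    · exact Or.inr (Or.inr ⟨h1, Relation.EqvGen.trans _ _ _ h2 g⟩)
    · exact Or.inl (Relation.EqvGen.trans _ _ _ h1 g2)
    · exact absurd (Relation.EqvGen.trans _ _ _ h2 g1) hxy

lemma kV_add_succ {V : Finset Site} {R : Site → Site → Prop} {x y : Site}
    (hx : x ∈ V) (hy : y ∈ V) (hxy : ¬ Relation.EqvGen R x y) :
    kV V R = kV V (addRel R x y) + 1 := by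
  classical
  set S : Setoid {x // x ∈ V} :=
    Setoid.comap Subtype.val (Relation.EqvGen.setoid R) with hS
  set S' : Setoid {x // x ∈ V} :=
    Setoid.comap Subtype.val (Relation.EqvGen.setoid (addRel R x y)) with hS'
  let g : Quotient S → Quotient S' :=
    Quotient.map' (fun x => x)
      (fun a b hab => Relation.EqvGen.mono (fun u v h => Or.inl h) _ _ hab)
  set Y : {x // x ∈ V} := ⟨y, hy⟩ with hYdef
  set X : {x // x ∈ V} := ⟨x, hx⟩ with hXdef
  have hXY' : Relation.EqvGen (addRel R x y) x y :=
    Relation.EqvGen.rel _ _ (Or.inr (Or.inl ⟨rfl, rfl⟩))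
  let f : Quotient S → Option (Quotient S') :=
    fun c => if c = Quotient.mk'' Y then none else some (g c)
  have hf : Function.Bijective f := by
    constructor
    · intro c1 c2 hc
      induction c1 using Quotient.inductionOn' with | h u => ?_
      induction c2 using Quotient.inductionOn' with | h v => ?_
      by_cases h1 : (Quotient.mk'' u : Quotient S) = Quotient.mk'' Y <;>
        by_cases h2 : (Quotient.mk'' v : Quotient S) = Quotient.mk'' Y
      · exact h1.trans h2.symm
      · simp only [f, if_pos h1, if_neg h2] at hc; exact absurd hc (by simp)
      · simp only [f, if_neg h1, if_pos h2] at hc; exact absurd hc (by simp)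
      · simp only [f, if_neg h1, if_neg h2] at hc
        have hgc : g (Quotient.mk'' u) = g (Quotient.mk'' v) := Option.some_injective _ hc
        have huv : Relation.EqvGen (addRel R x y) u.val v.val := Quotient.exact' hgc
        rcases eqvGen_addRel_cases hxy huv with h | ⟨ha, hb⟩ | ⟨ha, hb⟩
        · exact Quotient.sound' h
        · exact absurd (Quotient.sound' (Relation.EqvGen.symm _ _ hb) :
            (Quotient.mk'' v : Quotient S) = Quotient.mk'' Y) h2
        · exact absurd (Quotient.sound' ha :
            (Quotient.mk'' u : Quotient S) = Quotient.mk'' Y) h1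
    · intro o
      rcases o with _ | c
      · exact ⟨Quotient.mk'' Y, by simp [f]⟩
      · induction c using Quotient.inductionOn' with | h u => ?_
        by_cases hu : (Quotient.mk'' u : Quotient S) = Quotient.mk'' Y
        · refine ⟨Quotient.mk'' X, ?_⟩
          have hXneY : (Quotient.mk'' X : Quotient S) ≠ Quotient.mk'' Y := by
            intro hXYeq
            exact hxy (Quotient.exact' hXYeq)
          simp only [f, if_neg hXneY]
          congr 1
          have hu' : Relation.EqvGen R u.val y := Quotient.exact' hu
          refine Quotient.sound' ?_
          exact Relation.EqvGen.trans _ _ _ hXY'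
            (Relation.EqvGen.symm _ _ (Relation.EqvGen.mono (fun a b h => Or.inl h) _ _ hu'))
        · exact ⟨Quotient.mk'' u, by simp only [f, if_neg hu]; rfl⟩
  have hcard := Nat.card_eq_of_bijective f hf
  rw [Finite.card_option] at hcard
  exact hcard

lemma kV_step {V : Finset Site} {Rs Rd : Site → Site → Prop}
    (hsub : ∀ a b, Rs a b → Rd a b) {x y : Site} (hx : x ∈ V) (hy : y ∈ V) :
    kV V (addRel Rs x y) + kV V Rd ≤ kV V Rs + kV V (addRel Rd x y) := by
  by_cases hconn : Relation.EqvGen Rd x y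
  · have h1 : kV V (addRel Rd x y) = kV V Rd := kV_add_of_conn hconn
    have h2 : kV V (addRel Rs x y) ≤ kV V Rs :=
      kV_le (fun a b h => Relation.EqvGen.rel _ _ (Or.inl h))
    omega
  · have hconns : ¬ Relation.EqvGen Rs x y := fun h => hconn (Relation.EqvGen.mono hsub _ _ h)
    have h1 := kV_add_succ hx hy hconn
    have h2 := kV_add_succ hx hy hconns
    omega

end ClusterCount
section Configs

lemma bool_inf (x y : Bool) : x ⊓ y = (x && y) := by cases x <;> cases y <;> decide
lemma bool_sup (x y : Bool) : x ⊔ y = (x || y) := by cases x <;> cases y <;> decide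

lemma openAdj_mono {V : Finset Site} {w w' : edges V → Bool}
    (h : ∀ g, w g = true → w' g = true) {a b : Site} (hab : openAdj V w a b) :
    openAdj V w' a b := by
  rcases hab with ⟨hm, hw⟩ | ⟨hm, hw⟩
  · exact Or.inl ⟨hm, h _ hw⟩
  · exact Or.inr ⟨hm, h _ hw⟩

/-- The relation generating FK clusters. -/
def relOf (V : Finset Site) (ω : edges V → Bool) (W : Site → Site → Prop) :
    Site → Site → Prop :=
  fun a b => openAdj V ω a b ∨ W a b

lemma numClusters_eq_kV (V : Finset Site) (ω : edges V → Bool) (W : Site → Site → Prop) :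
    numClusters V ω W = kV V (relOf V ω W) := rfl

lemma edge_mem {V : Finset Site} (f : edges V) : f.val.1 ∈ V ∧ f.val.2 ∈ V := by
  have hf := f.2
  simp only [edges, Finset.mem_filter, Finset.mem_product] at hf
  exact hf.1

/-- Open all the edges of `T`. -/
def opn (V : Finset Site) (T : Finset (edges V)) (w : edges V → Bool) : edges V → Bool :=
  fun g => if g ∈ T then true else w g

lemma opn_empty (V : Finset Site) (w : edges V → Bool) : opn V ∅ w = w := by
  funext g; simp [opn]

lemma opn_insert {V : Finset Site} {T : Finset (edges V)} {f : edges V} (hf : f ∉ T)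
    (w : edges V → Bool) :
    opn V (insert f T) w = fun g => if g = f then true else opn V T w g := by
  funext g
  simp only [opn, Finset.mem_insert]
  by_cases h1 : g = f
  · simp [h1]
  · simp [h1]

lemma relOf_update {V : Finset Site} (w₀ : edges V → Bool) (f : edges V)
    (W : Site → Site → Prop) (a b : Site) :
    relOf V (fun g => if g = f then true else w₀ g) W a b ↔
      addRel (relOf V w₀ W) f.val.1 f.val.2 a b := by
  constructor
  · rintro (hadj | hW)
    · rcases hadj with ⟨hm, hw⟩ | ⟨hm, hw⟩
      · by_cases hq : (⟨(a, b), hm⟩ : edges V) = f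
        · have hab : (a, b) = f.val := by rw [← hq]
          exact Or.inr (Or.inl ⟨congrArg Prod.fst hab, congrArg Prod.snd hab⟩)
        · simp only [if_neg hq] at hw
          exact Or.inl (Or.inl (Or.inl ⟨hm, hw⟩))
      · by_cases hq : (⟨(b, a), hm⟩ : edges V) = f
        · have hab : (b, a) = f.val := by rw [← hq]
          exact Or.inr (Or.inr ⟨congrArg Prod.snd hab, congrArg Prod.fst hab⟩)
        · simp only [if_neg hq] at hw
          exact Or.inl (Or.inl (Or.inr ⟨hm, hw⟩))
    · exact Or.inl (Or.inr hW)
  · rintro ((hadj | hW) | ⟨rfl, rfl⟩ | ⟨rfl, rfl⟩)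
    · exact Or.inl (openAdj_mono (fun g hg => by
        by_cases hgf : g = f
        · simp [hgf]
        · simpa [hgf] using hg) hadj)
    · exact Or.inr hW
    · refine Or.inl (Or.inl ⟨f.2, ?_⟩)
      simp
    · refine Or.inl (Or.inr ⟨f.2, ?_⟩)
      simp

lemma kV_opn {V : Finset Site} {W W' : Site → Site → Prop} (hW : ∀ a b, W' a b → W a b)
    (T : Finset (edges V)) (u v : edges V → Bool) (huv : ∀ g, u g = true → v g = true) :
    kV V (relOf V (opn V T u) W') + kV V (relOf V v W)
      ≤ kV V (relOf V u W') + kV V (relOf V (opn V T v) W) := by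
  classical
  induction T using Finset.induction_on with
  | empty => rw [opn_empty, opn_empty]
  | @insert f T hf ih =>
    have hx := (edge_mem f).1
    have hy := (edge_mem f).2
    have hsub : ∀ a b, relOf V (opn V T u) W' a b → relOf V (opn V T v) W a b := by
      rintro a b (hadj | hW')
      · refine Or.inl (openAdj_mono (fun g hg => ?_) hadj)
        simp only [opn] at hg ⊢
        by_cases h : g ∈ T
        · simp [h]
        · rw [if_neg h] at hg ⊢; exact huv g hg
      · exact Or.inr (hW _ _ hW')
    have step := kV_step hsub hx hy
    have e1 : kV V (relOf V (opn V (insert f T) u) W')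
        = kV V (addRel (relOf V (opn V T u) W') f.val.1 f.val.2) := by
      rw [opn_insert hf]
      exact kV_congr (fun a b => relOf_update (opn V T u) f W' a b)
    have e2 : kV V (relOf V (opn V (insert f T) v) W)
        = kV V (addRel (relOf V (opn V T v) W) f.val.1 f.val.2) := by
      rw [opn_insert hf]
      exact kV_congr (fun a b => relOf_update (opn V T v) f W a b)
    rw [e1, e2]
    omega

lemma numClusters_supermod {V : Finset Site} {W W' : Site → Site → Prop}
    (hW : ∀ a b, W' a b → W a b) (a b : edges V → Bool) :
    numClusters V a W' + numClusters V b W ≤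
      numClusters V (a ⊓ b) W' + numClusters V (a ⊔ b) W := by
  classical
  set T : Finset (edges V) := Finset.univ.filter fun g => a g = true ∧ b g = false with hT
  have h1 : opn V T (a ⊓ b) = a := by
    funext g
    simp only [opn, hT, Finset.mem_filter, Finset.mem_univ, true_and]
    have hinf : (a ⊓ b) g = (a g && b g) := bool_inf _ _
    by_cases hab : a g = true ∧ b g = false
    · rw [if_pos hab, hab.1]
    · rw [if_neg hab, hinf]
      cases ha : a g <;> cases hb : b g <;> simp_all
  have h2 : opn V T b = a ⊔ b := by
    funext g
    simp only [opn, hT, Finset.mem_filter, Finset.mem_univ, true_and]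
    have hsup : (a ⊔ b) g = (a g || b g) := bool_sup _ _
    by_cases hab : a g = true ∧ b g = false
    · rw [if_pos hab, hsup, hab.1]; rfl
    · rw [if_neg hab, hsup]
      cases ha : a g <;> cases hb : b g <;> simp_all
  have hle : ∀ g, (a ⊓ b) g = true → b g = true := by
    intro g hg
    have hinf : (a ⊓ b) g = (a g && b g) := bool_inf _ _
    rw [hinf] at hg
    exact (Bool.and_eq_true_iff.mp hg).2
  have key := kV_opn hW T (a ⊓ b) b hle
  rw [h1, h2] at key
  exact key

end Configs
section Weights

lemma numOpen_inf_sup (V : Finset Site) (a b : edges V → Bool) :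
    numOpen V (a ⊓ b) + numOpen V (a ⊔ b) = numOpen V a + numOpen V b := by
  classical
  unfold numOpen
  rw [Finset.card_filter, Finset.card_filter, Finset.card_filter, Finset.card_filter,
    ← Finset.sum_add_distrib, ← Finset.sum_add_distrib]
  refine Finset.sum_congr rfl fun g _ => ?_
  have hi : (a ⊓ b) g = (a g && b g) := bool_inf _ _
  have hs : (a ⊔ b) g = (a g || b g) := bool_sup _ _
  rw [hi, hs]
  cases ha : a g <;> cases hb : b g <;> simp

lemma numClosed_inf_sup (V : Finset Site) (a b : edges V → Bool) :
    numClosed V (a ⊓ b) + numClosed V (a ⊔ b) = numClosed V a + numClosed V b := by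
  classical
  unfold numClosed
  rw [Finset.card_filter, Finset.card_filter, Finset.card_filter, Finset.card_filter,
    ← Finset.sum_add_distrib, ← Finset.sum_add_distrib]
  refine Finset.sum_congr rfl fun g _ => ?_
  have hi : (a ⊓ b) g = (a g && b g) := bool_inf _ _
  have hs : (a ⊔ b) g = (a g || b g) := bool_sup _ _
  rw [hi, hs]
  cases ha : a g <;> cases hb : b g <;> simp

lemma fkWeight_pos {p : ℝ} (h0 : 0 < p) (h1 : p < 1) (V : Finset Site)
    (W : Site → Site → Prop) (ω : edges V → Bool) : 0 < fkWeight p V W ω :=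
  mul_pos (mul_pos (pow_pos h0 _) (pow_pos (by linarith) _)) (pow_pos (by norm_num) _)

lemma fkWeight_ffc {W W' : Site → Site → Prop} (hW : ∀ a b, W' a b → W a b)
    {V : Finset Site} (a b : edges V → Bool) {p : ℝ} (h0 : 0 ≤ p) (h1 : p ≤ 1) :
    fkWeight p V W' a * fkWeight p V W b ≤
      fkWeight p V W' (a ⊓ b) * fkWeight p V W (a ⊔ b) := by
  have ho := numOpen_inf_sup V a b
  have hc := numClosed_inf_sup V a b
  have hk : numClusters V a W' + numClusters V b W
      ≤ numClusters V (a ⊓ b) W' + numClusters V (a ⊔ b) W := numClusters_supermod hW a b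
  have h1p : (0:ℝ) ≤ 1 - p := by linarith
  unfold fkWeight
  calc p ^ numOpen V a * (1 - p) ^ numClosed V a * 2 ^ numClusters V a W' *
        (p ^ numOpen V b * (1 - p) ^ numClosed V b * 2 ^ numClusters V b W)
      = p ^ (numOpen V a + numOpen V b) * (1 - p) ^ (numClosed V a + numClosed V b) *
        2 ^ (numClusters V a W' + numClusters V b W) := by
        rw [pow_add, pow_add, pow_add]; ring
    _ ≤ p ^ (numOpen V a + numOpen V b) * (1 - p) ^ (numClosed V a + numClosed V b) *
        2 ^ (numClusters V (a ⊓ b) W' + numClusters V (a ⊔ b) W) := by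
        refine mul_le_mul_of_nonneg_left ?_
          (mul_nonneg (pow_nonneg h0 _) (pow_nonneg h1p _))
        exact pow_le_pow_right₀ one_le_two hk
    _ = p ^ numOpen V (a ⊓ b) * (1 - p) ^ numClosed V (a ⊓ b) * 2 ^ numClusters V (a ⊓ b) W' *
        (p ^ numOpen V (a ⊔ b) * (1 - p) ^ numClosed V (a ⊔ b) *
          2 ^ numClusters V (a ⊔ b) W) := by
        rw [← ho, ← hc, pow_add, pow_add, pow_add]; ring

lemma pSD_pos : 0 < pSD := by
  unfold pSD
  have h2 : (0:ℝ) < Real.sqrt 2 := Real.sqrt_pos.2 (by norm_num)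
  positivity

lemma pSD_lt_one : pSD < 1 := by
  unfold pSD
  have h2 : (0:ℝ) ≤ Real.sqrt 2 := Real.sqrt_nonneg 2
  rw [div_lt_one (by linarith)]
  linarith

/-- The abstract comparison inequality (Holley-style consequence of the
four functions theorem). -/
lemma main_ineq {V : Finset Site} {W1 W2 : Site → Site → Prop}
    (hW : ∀ a b, W2 a b → W1 a b) {p : ℝ} (h0 : 0 < p) (h1 : p < 1)
    (C1 C2 : (edges V → Bool) → Prop)
    (hC : ∀ a b : edges V → Bool, C2 a → C1 b → C2 (a ⊓ b) ∧ C1 (a ⊔ b))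
    (e : edges V)
    (hpos1 : 0 < fkProb p V W1 C1) (hpos2 : 0 < fkProb p V W2 C2) :
    fkProb p V W2 (fun ω => ω e = true ∧ C2 ω) / fkProb p V W2 C2
      ≤ fkProb p V W1 (fun ω => ω e = true ∧ C1 ω) / fkProb p V W1 C1 := by
  have hwpos : ∀ (W : Site → Site → Prop) (ω : edges V → Bool), 0 < fkWeight p V W ω :=
    fun W ω => fkWeight_pos h0 h1 V W ω
  set A2 : (edges V → Bool) → Prop := fun ω => ω e = true ∧ C2 ω with hA2
  set A1 : (edges V → Bool) → Prop := fun ω => ω e = true ∧ C1 ω with hA1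
  have hZ1 : 0 < ∑ ω : edges V → Bool, fkWeight p V W1 ω :=
    Finset.sum_pos (fun ω _ => hwpos W1 ω) Finset.univ_nonempty
  have hZ2 : 0 < ∑ ω : edges V → Bool, fkWeight p V W2 ω :=
    Finset.sum_pos (fun ω _ => hwpos W2 ω) Finset.univ_nonempty
  have hD1 : 0 < ∑ ω : edges V → Bool, if C1 ω then fkWeight p V W1 ω else 0 := by
    have h := mul_pos hpos1 hZ1
    unfold fkProb at h
    rwa [div_mul_cancel₀ _ (ne_of_gt hZ1)] at h
  have hD2 : 0 < ∑ ω : edges V → Bool, if C2 ω then fkWeight p V W2 ω else 0 := by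
    have h := mul_pos hpos2 hZ2
    unfold fkProb at h
    rwa [div_mul_cancel₀ _ (ne_of_gt hZ2)] at h
  have hnn : ∀ (W : Site → Site → Prop) (ω : edges V → Bool) {c : Prop}
      {inst : Decidable c}, (0:ℝ) ≤ @ite ℝ c inst (fkWeight p V W ω) 0 := by
    intro W ω c inst
    split_ifs
    · exact (hwpos W ω).le
    · exact le_rfl
  have hff := four_functions_theorem_univ
    (fun ω => @ite ℝ (A2 ω) (Classical.propDecidable _) (fkWeight p V W2 ω) 0)
    (fun ω => if C1 ω then fkWeight p V W1 ω else 0)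
    (fun ω => if C2 ω then fkWeight p V W2 ω else 0)
    (fun ω => @ite ℝ (A1 ω) (Classical.propDecidable _) (fkWeight p V W1 ω) 0)
    (Pi.le_def.mpr fun ω => by rw [Pi.zero_apply]; exact hnn W2 ω)
    (Pi.le_def.mpr fun ω => by rw [Pi.zero_apply]; exact hnn W1 ω)
    (Pi.le_def.mpr fun ω => by rw [Pi.zero_apply]; exact hnn W2 ω)
    (Pi.le_def.mpr fun ω => by rw [Pi.zero_apply]; exact hnn W1 ω)
    (by
      intro a b
      beta_reduce
      by_cases hA : A2 a
      · have hA' : a e = true ∧ C2 a := hA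
        by_cases hB : C1 b
        · have h3 := (hC a b hA'.2 hB).1
          have h4 := (hC a b hA'.2 hB).2
          have h4e : (a ⊔ b) e = true := by
            have hs : (a ⊔ b) e = (a e || b e) := bool_sup _ _
            rw [hs, hA'.1]
            simp
          rw [if_pos hA, if_pos hB, if_pos h3,
            if_pos (show A1 (a ⊔ b) from ⟨h4e, h4⟩)]
          exact fkWeight_ffc hW a b h0.le h1.le
        · rw [if_neg hB, mul_zero]
          exact mul_nonneg (hnn W2 (a ⊓ b)) (hnn W1 (a ⊔ b))
      · rw [if_neg hA, zero_mul]
        exact mul_nonneg (hnn W2 (a ⊓ b)) (hnn W1 (a ⊔ b)))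
  beta_reduce at hff
  have hdiv : ∀ x y z : ℝ, z ≠ 0 → x / z / (y / z) = x / y := by
    intro x y z hz
    rcases eq_or_ne y 0 with rfl | hy
    · simp
    · field_simp
  unfold fkProb
  rw [hdiv _ _ _ (ne_of_gt hZ2), hdiv _ _ _ (ne_of_gt hZ1),
    div_le_div_iff₀ hD2 hD1]
  calc (∑ ω : edges V → Bool, @ite ℝ (A2 ω) (Classical.propDecidable _)
          (fkWeight p V W2 ω) 0) *
        (∑ ω : edges V → Bool, (if C1 ω then fkWeight p V W1 ω else 0))
      ≤ (∑ ω : edges V → Bool, (if C2 ω then fkWeight p V W2 ω else 0)) *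
        (∑ ω : edges V → Bool, @ite ℝ (A1 ω) (Classical.propDecidable _)
          (fkWeight p V W1 ω) 0) := hff
    _ = (∑ ω : edges V → Bool, @ite ℝ (A1 ω) (Classical.propDecidable _)
          (fkWeight p V W1 ω) 0) *
        (∑ ω : edges V → Bool, (if C2 ω then fkWeight p V W2 ω else 0)) := mul_comm _ _

end Weights
theorem stmt7 (Λ : Finset Site) (ξ : bdry Λ → Bool)
    (Δ : Finset (edges (Λ ∪ bdry Λ))) (e : edges (Λ ∪ bdry Λ)) (he : e ∉ Δ)
    (η η' : Δ → Bool) (hmono : ∀ d : Δ, η' d = true → η d = true)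
    (hpos1 : 0 < fkProb pSD (Λ ∪ bdry Λ) (fullWiring Λ)
      (fun ω => ∀ d : Δ, ω d.1 = η d))
    (hpos2 : 0 < fkProb pSD (Λ ∪ bdry Λ) (wiringOf Λ ξ)
      (fun ω => noPMPath Λ ξ ω ∧ ∀ d : Δ, ω d.1 = η' d)) :
    fkProb pSD (Λ ∪ bdry Λ) (fullWiring Λ)
        (fun ω => ω e = true ∧ ∀ d : Δ, ω d.1 = η d) /
      fkProb pSD (Λ ∪ bdry Λ) (fullWiring Λ) (fun ω => ∀ d : Δ, ω d.1 = η d)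
    ≥ fkProb pSD (Λ ∪ bdry Λ) (wiringOf Λ ξ)
        (fun ω => ω e = true ∧ noPMPath Λ ξ ω ∧ ∀ d : Δ, ω d.1 = η' d) /
      fkProb pSD (Λ ∪ bdry Λ) (wiringOf Λ ξ)
        (fun ω => noPMPath Λ ξ ω ∧ ∀ d : Δ, ω d.1 = η' d) := by
  have hW : ∀ a b, wiringOf Λ ξ a b → fullWiring Λ a b := by
    rintro a b ⟨ha, hb, -⟩
    exact ⟨ha, hb⟩
  have hC : ∀ a b : edges (Λ ∪ bdry Λ) → Bool,
      (noPMPath Λ ξ a ∧ ∀ d : Δ, a d.1 = η' d) → (∀ d : Δ, b d.1 = η d) →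
      (noPMPath Λ ξ (a ⊓ b) ∧ ∀ d : Δ, (a ⊓ b) d.1 = η' d) ∧
        (∀ d : Δ, (a ⊔ b) d.1 = η d) := by
    intro a b hA hB
    refine ⟨⟨?_, ?_⟩, ?_⟩
    · intro hex
      apply hA.1
      obtain ⟨pp, qq, hp, hq, h1, h2, hconn⟩ := hex
      refine ⟨pp, qq, hp, hq, h1, h2, ?_⟩
      exact Relation.EqvGen.mono (fun u v (huv : openAdj (Λ ∪ bdry Λ) (a ⊓ b) u v ∨ wiringOf Λ ξ u v) => huv.imp (openAdj_mono (fun g hg => by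
        have hinf : (a ⊓ b) g = (a g && b g) := bool_inf _ _
        rw [hinf] at hg
        exact (Bool.and_eq_true_iff.mp hg).1)) id) _ _ hconn
    · intro d
      have hinf : (a ⊓ b) d.1 = (a d.1 && b d.1) := bool_inf _ _
      rw [hinf, hA.2 d, hB d]
      cases hd : η' d
      · simp
      · simp [hmono d hd]
    · intro d
      have hsup : (a ⊔ b) d.1 = (a d.1 || b d.1) := bool_sup _ _
      rw [hsup, hA.2 d, hB d]
      cases hd : η' d
      · simp
      · simp [hmono d hd]
  exact main_ineq hW pSD_pos pSD_lt_one _ _ hC e hpos1 hpos2
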